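/- arXiv:2006.07013 — 3 statements merged into one kernel-verified Lean document; each statement's English description precedes it below -/
import Mathlib

section
/- Under the setup of the minibatch L-SVRG estimator: if in addition the family $\{f_i\}$ is average $L$-smooth, i.e., $\frac{1}{n}\sum_{i=1}^n \|\nabla f_i(x) - \nabla f_i(y)\|^2 \le L^2\|x-y\|^2$ for all $x,y$, then $\mathbb{E}[\|g\|^2] \le \frac{L^2}{b}\|x - w\|^2 + \|\nabla f(x)\|^2$. -/
open Finset
open scoped RealInnerProductSpace

lemma sumA {ι : Type*} [Fintype ι] [DecidableEq ι] {n : ℕ} (t : ι) (G : Fin n → ℝ) :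
    ∑ j : ι → Fin n, G (j t) = (n : ℝ) ^ (Fintype.card ι - 1) * ∑ i, G i := by
  rw [← Equiv.sum_comp (Equiv.funSplitAt t (Fin n)).symm (fun j => G (j t))]
  simp [Equiv.funSplitAt, Fintype.sum_prod_type, Finset.sum_comm, mul_comm,
    Set.card_ne_eq, ← Finset.sum_mul]

lemma sumB {ι : Type*} [Fintype ι] [DecidableEq ι] {n : ℕ} {s t : ι} (hst : s ≠ t)
    (Φ : Fin n → Fin n → ℝ) :
    ∑ j : ι → Fin n, Φ (j s) (j t) =
      (n : ℝ) ^ (Fintype.card ι - 2) * ∑ p, ∑ q, Φ p q := by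
  rw [← Equiv.sum_comp (Equiv.funSplitAt s (Fin n)).symm (fun j => Φ (j s) (j t)),
    Fintype.sum_prod_type]
  have key : ∀ i : Fin n,
      (∑ r : { x : ι // x ≠ s } → Fin n, Φ i (r ⟨t, hst.symm⟩)) =
        (n : ℝ) ^ (Fintype.card ι - 2) * ∑ q, Φ i q := by
    intro i
    rw [sumA (⟨t, hst.symm⟩ : { x : ι // x ≠ s }) (fun q => Φ i q)]
    congr 2
    have : Fintype.card { x // x ≠ s } = Fintype.card ι - 1 := Set.card_ne_eq s
    omega
  have : ∀ i : Fin n, ∀ r : { x : ι // x ≠ s } → Fin n,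
      Φ ((Equiv.funSplitAt s (Fin n)).symm (i, r) s)
        ((Equiv.funSplitAt s (Fin n)).symm (i, r) t) = Φ i (r ⟨t, hst.symm⟩) := by
    intro i r
    simp [Equiv.funSplitAt, hst.symm]
  simp_rw [this, key, ← Finset.mul_sum]

lemma grad_comb {d n : ℕ} (f : Fin n → EuclideanSpace ℝ (Fin d) → ℝ)
    (hdiff : ∀ i, Differentiable ℝ (f i)) (c : ℝ) (p : EuclideanSpace ℝ (Fin d)) :
    gradient (fun y => c * ∑ i, f i y) p = c • ∑ i, gradient (f i) p := by
  have h : HasFDerivAt (fun y : EuclideanSpace ℝ (Fin d) => c * ∑ i, f i y)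
      (c • ∑ i, (InnerProductSpace.toDual ℝ _) (gradient (f i) p)) p :=
    (HasFDerivAt.fun_sum (fun i _ =>
      (hasGradientAt_iff_hasFDerivAt.mp (hdiff i p).hasGradientAt))).const_mul c
  have h2 : (c • ∑ i, (InnerProductSpace.toDual ℝ (EuclideanSpace ℝ (Fin d)))
        (gradient (f i) p)) =
      (InnerProductSpace.toDual ℝ _) (c • ∑ i, gradient (f i) p) := by
    simp
  rw [h2] at h
  exact (hasGradientAt_iff_hasFDerivAt.mpr h).gradient

set_option maxHeartbeats 1000000 in
/-- Second-moment bound for the minibatch L-SVRG gradient estimator under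
average L-smoothness. -/
theorem stmt_9 (d n b : ℕ) (hn : 0 < n) (hb : 0 < b)
    (f : Fin n → EuclideanSpace ℝ (Fin d) → ℝ)
    (hdiff : ∀ i, Differentiable ℝ (f i))
    (L : ℝ) (hL : 0 ≤ L)
    (havg : ∀ y z : EuclideanSpace ℝ (Fin d),
      (n : ℝ)⁻¹ * ∑ i, ‖gradient (f i) y - gradient (f i) z‖ ^ 2 ≤
        L ^ 2 * ‖y - z‖ ^ 2)
    (x w : EuclideanSpace ℝ (Fin d)) :
    ((n : ℝ) ^ b)⁻¹ *
        ∑ j : Fin b → Fin n,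
          ‖(b : ℝ)⁻¹ • ∑ t : Fin b, (gradient (f (j t)) x - gradient (f (j t)) w) +
              gradient (fun y => (n : ℝ)⁻¹ * ∑ i, f i y) w‖ ^ 2 ≤
      L ^ 2 / b * ‖x - w‖ ^ 2 +
        ‖gradient (fun y => (n : ℝ)⁻¹ * ∑ i, f i y) x‖ ^ 2 := by
  have hn' : (0:ℝ) < n := by exact_mod_cast hn
  have hb' : (0:ℝ) < b := by exact_mod_cast hb
  set a : Fin n → EuclideanSpace ℝ (Fin d) := fun i => gradient (f i) x - gradient (f i) w with ha
  set μ : EuclideanSpace ℝ (Fin d) := (n:ℝ)⁻¹ • ∑ i, a i with hμ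
  set u : Fin n → EuclideanSpace ℝ (Fin d) := fun i => a i - μ with hu
  set m : EuclideanSpace ℝ (Fin d) := gradient (fun y => (n : ℝ)⁻¹ * ∑ i, f i y) x with hm
  -- sum of u is zero
  have hsuma : ∑ i, a i = (n:ℝ) • μ := by
    rw [hμ, smul_smul, mul_inv_cancel₀ hn'.ne', one_smul]
  have hsumu : ∑ i, u i = 0 := by
    rw [hu]
    simp only [Finset.sum_sub_distrib, Finset.sum_const, Finset.card_univ,
      Fintype.card_fin, hsuma, Nat.cast_smul_eq_nsmul ℝ, sub_self]
  -- m = μ + gradient favg w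
  have hmeq : μ + gradient (fun y => (n : ℝ)⁻¹ * ∑ i, f i y) w = m := by
    rw [hm, grad_comb f hdiff, grad_comb f hdiff, hμ, ha]
    simp only [Finset.sum_sub_distrib, smul_sub]
    abel
  -- rewrite each summand
  have hsummand : ∀ j : Fin b → Fin n,
      (b : ℝ)⁻¹ • ∑ t : Fin b, (gradient (f (j t)) x - gradient (f (j t)) w) +
          gradient (fun y => (n : ℝ)⁻¹ * ∑ i, f i y) w
        = (b:ℝ)⁻¹ • ∑ t : Fin b, u (j t) + m := by
    intro j
    have : ∑ t : Fin b, (gradient (f (j t)) x - gradient (f (j t)) w)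
        = (∑ t : Fin b, u (j t)) + (b:ℝ) • μ := by
      simp only [hu, Finset.sum_sub_distrib, Finset.sum_const, Finset.card_univ,
        Fintype.card_fin, Nat.cast_smul_eq_nsmul ℝ, ha]
      abel
    rw [this, smul_add, smul_smul, inv_mul_cancel₀ hb'.ne', one_smul, add_assoc, hmeq]
  -- expand the squared norm
  have hexpand : ∀ j : Fin b → Fin n,
      ‖(b:ℝ)⁻¹ • ∑ t, u (j t) + m‖ ^ 2 =
        ((b:ℝ)⁻¹)^2 * ∑ s, ∑ t, ⟪u (j s), u (j t)⟫ +
          2 * ((b:ℝ)⁻¹ * ∑ t, ⟪u (j t), m⟫) + ‖m‖ ^ 2 := by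
    intro j
    rw [norm_add_sq_real, norm_smul, mul_pow, ← real_inner_self_eq_norm_sq (∑ t, u (j t)),
      sum_inner, real_inner_smul_left]
    simp_rw [inner_sum, sum_inner]
    norm_num [abs_of_nonneg, mul_comm]
  -- expectation of cross term is zero
  have hcross : ∀ t : Fin b, ∑ j : Fin b → Fin n, ⟪u (j t), m⟫ = 0 := by
    intro t
    rw [sumA t (fun i => ⟪u i, m⟫), ← sum_inner, hsumu]
    simp
  -- expectation of quadratic term
  have hquad : ∀ s t : Fin b, ∑ j : Fin b → Fin n, ⟪u (j s), u (j t)⟫ =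
      if s = t then (n:ℝ) ^ (b - 1) * ∑ i, ‖u i‖ ^ 2 else 0 := by
    intro s t
    by_cases hst : s = t
    · subst hst
      rw [if_pos rfl, sumA s (fun i => ⟪u i, u i⟫)]
      simp_rw [real_inner_self_eq_norm_sq]
      norm_num
    · rw [if_neg hst, sumB hst (fun p q => ⟪u p, u q⟫)]
      have : ∑ p, ∑ q, ⟪u p, u q⟫ = ⟪∑ p, u p, ∑ q, u q⟫ := by
        rw [sum_inner]
        simp_rw [inner_sum]
      rw [this, hsumu, inner_zero_left, mul_zero]
  -- the exact expectation identity
  have hkey : ((n : ℝ) ^ b)⁻¹ *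
        ∑ j : Fin b → Fin n,
          ‖(b : ℝ)⁻¹ • ∑ t : Fin b, (gradient (f (j t)) x - gradient (f (j t)) w) +
              gradient (fun y => (n : ℝ)⁻¹ * ∑ i, f i y) w‖ ^ 2
      = (b:ℝ)⁻¹ * ((n:ℝ)⁻¹ * ∑ i, ‖u i‖ ^ 2) + ‖m‖ ^ 2 := by
    simp_rw [hsummand, hexpand]
    rw [Finset.sum_add_distrib, Finset.sum_add_distrib]
    rw [← Finset.mul_sum, ← Finset.mul_sum]
    have h1 : ∑ j : Fin b → Fin n, ∑ s, ∑ t, ⟪u (j s), u (j t)⟫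
        = (b:ℝ) * ((n:ℝ) ^ (b - 1) * ∑ i, ‖u i‖ ^ 2) := by
      rw [Finset.sum_comm]
      have : ∀ s : Fin b, ∑ j : Fin b → Fin n, ∑ t, ⟪u (j s), u (j t)⟫
          = (n:ℝ) ^ (b - 1) * ∑ i, ‖u i‖ ^ 2 := by
        intro s
        rw [Finset.sum_comm]
        simp_rw [hquad]
        simp
      simp_rw [this]
      simp [Finset.sum_const, mul_comm]
    have h2 : ∑ j : Fin b → Fin n, ∑ t, ⟪u (j t), m⟫ = 0 := by
      rw [Finset.sum_comm]
      exact Finset.sum_eq_zero fun t _ => hcross t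
    have e2 : ∑ j : Fin b → Fin n, ((b:ℝ)⁻¹ * ∑ t, ⟪u (j t), m⟫) = 0 := by
      rw [← Finset.mul_sum, h2, mul_zero]
    have e3 : ∑ _j : Fin b → Fin n, ‖m‖ ^ 2 = ((n:ℝ) ^ b) * ‖m‖ ^ 2 := by
      simp [Finset.sum_const, Fintype.card_fun]
    rw [h1, e2, e3, mul_zero, add_zero]
    have hpow : ((n:ℝ)) ^ b = n * n ^ (b - 1) := by
      rw [← pow_succ']
      congr 1
      omega
    rw [hpow]
    have h1' : (n:ℝ) ^ (b-1) ≠ 0 := pow_ne_zero _ hn'.ne'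
    field_simp
  rw [hkey]
  have hsum_inner : ∑ i, ⟪a i, μ⟫ = (n:ℝ) * ‖μ‖ ^ 2 := by
    rw [← sum_inner, hsuma, real_inner_smul_left, real_inner_self_eq_norm_sq]
  have hexp : ∑ i, ‖u i‖ ^ 2 = ∑ i, ‖a i‖ ^ 2 - (n:ℝ) * ‖μ‖ ^ 2 := by
    have : ∀ i, ‖u i‖ ^ 2 = ‖a i‖ ^ 2 - 2 * ⟪a i, μ⟫ + ‖μ‖ ^ 2 := by
      intro i
      rw [hu]
      exact norm_sub_sq_real _ _
    simp_rw [this]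
    rw [Finset.sum_add_distrib, Finset.sum_sub_distrib, ← Finset.mul_sum, hsum_inner]
    simp [Finset.sum_const, Fintype.card_fin]
    ring
  have hub : ∑ i, ‖u i‖ ^ 2 ≤ ∑ i, ‖a i‖ ^ 2 := by
    rw [hexp]
    nlinarith [sq_nonneg ‖μ‖, hn']
  have key2a : (n:ℝ)⁻¹ * ∑ i, ‖a i‖ ^ 2 ≤ L ^ 2 * ‖x - w‖ ^ 2 := havg x w
  have key2 : (n:ℝ)⁻¹ * ∑ i, ‖u i‖ ^ 2 ≤ L ^ 2 * ‖x - w‖ ^ 2 :=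
    le_trans (mul_le_mul_of_nonneg_left hub (inv_nonneg.mpr hn'.le)) key2a
  have h3 : L ^ 2 / b * ‖x - w‖ ^ 2 = (b:ℝ)⁻¹ * (L ^ 2 * ‖x - w‖ ^ 2) := by ring
  rw [h3]
  exact add_le_add (mul_le_mul_of_nonneg_left key2 (inv_nonneg.mpr hb'.le)) le_rfl
end

section
/- Let $x, w, g \in \mathbb{R}^d$, $\eta > 0$, $p \in (0,1]$, and let $x^+ = x - \eta g$ with $g$ random satisfying $\mathbb{E}[g] = \nabla f(x)$. Let $w^+ = x$ with probability $p$ and $w^+ = w$ with probability $1-p$, independently. Then for every $\gamma > 0$: $\mathbb{E}[\|x^+ - w^+\|^2] \le (1-p)(1+\gamma)\|x - w\|^2 + \frac{(1-p)\eta^2}{\gamma}\|\nabla f(x)\|^2 + \eta^2 \mathbb{E}[\|g\|^2]$. -/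
open MeasureTheory

/-- Key recursion controlling the L-SVRG reference-point drift: the expectation
over the joint randomness (gradient estimator g and independent Bernoulli(p)
update of the reference point) is bounded via Young's inequality. -/
theorem stmt_11 (d : ℕ) {Ω : Type*} [MeasurableSpace Ω]
    (μ : Measure Ω) [IsProbabilityMeasure μ]
    (f : EuclideanSpace ℝ (Fin d) → ℝ) (hdiff : Differentiable ℝ f)
    (x w : EuclideanSpace ℝ (Fin d))
    (g : Ω → EuclideanSpace ℝ (Fin d))
    (hint : Integrable g μ) (hint2 : Integrable (fun ω => ‖g ω‖ ^ 2) μ)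
    (hunbiased : (∫ ω, g ω ∂μ) = gradient f x)
    (η : ℝ) (hη : 0 < η) (p : ℝ) (hp0 : 0 < p) (hp1 : p ≤ 1)
    (γ : ℝ) (hγ : 0 < γ) :
    p * (∫ ω, ‖(x - η • g ω) - x‖ ^ 2 ∂μ) +
        (1 - p) * (∫ ω, ‖(x - η • g ω) - w‖ ^ 2 ∂μ) ≤
      (1 - p) * (1 + γ) * ‖x - w‖ ^ 2 +
        (1 - p) * η ^ 2 / γ * ‖gradient f x‖ ^ 2 +
        η ^ 2 * (∫ ω, ‖g ω‖ ^ 2 ∂μ) := by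
  set v := gradient f x with hv
  have h1 : (∫ ω, ‖(x - η • g ω) - x‖ ^ 2 ∂μ) = η ^ 2 * ∫ ω, ‖g ω‖ ^ 2 ∂μ := by
    rw [← integral_const_mul]
    congr 1; ext ω
    have : (x - η • g ω) - x = -(η • g ω) := by abel
    rw [this, norm_neg, norm_smul]
    simp [mul_pow, abs_of_pos hη]
  have hinner : Integrable (fun ω => (inner ℝ (x - w) (g ω) : ℝ)) μ := hint.const_inner _
  have hB : Integrable (fun ω => 2 * η * (inner ℝ (x - w) (g ω) : ℝ)) μ := hinner.const_mul _
  have hC : Integrable (fun ω => η ^ 2 * ‖g ω‖ ^ 2) μ := hint2.const_mul _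
  have hA : Integrable (fun ω => ‖x - w‖ ^ 2 - 2 * η * (inner ℝ (x - w) (g ω) : ℝ)) μ :=
    (integrable_const _).sub hB
  have h2 : (∫ ω, ‖(x - η • g ω) - w‖ ^ 2 ∂μ)
      = ‖x - w‖ ^ 2 - 2 * η * (inner ℝ (x - w) v : ℝ) + η ^ 2 * ∫ ω, ‖g ω‖ ^ 2 ∂μ := by
    have hpt : ∀ ω, ‖(x - η • g ω) - w‖ ^ 2
        = ‖x - w‖ ^ 2 - 2 * η * (inner ℝ (x - w) (g ω) : ℝ) + η ^ 2 * ‖g ω‖ ^ 2 := by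
      intro ω
      have : (x - η • g ω) - w = (x - w) - η • g ω := by abel
      rw [this, norm_sub_sq_real, inner_smul_right, norm_smul, Real.norm_eq_abs,
        abs_of_pos hη]
      ring
    calc (∫ ω, ‖(x - η • g ω) - w‖ ^ 2 ∂μ)
        = ∫ ω, ((‖x - w‖ ^ 2 - 2 * η * (inner ℝ (x - w) (g ω) : ℝ)) + η ^ 2 * ‖g ω‖ ^ 2) ∂μ := by
          exact integral_congr_ae (Filter.Eventually.of_forall hpt)
      _ = ‖x - w‖ ^ 2 - 2 * η * (inner ℝ (x - w) v : ℝ) + η ^ 2 * ∫ ω, ‖g ω‖ ^ 2 ∂μ := by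
          rw [integral_add hA hC, integral_sub (integrable_const _) hB, integral_const,
            integral_const_mul, integral_const_mul, integral_inner hint, hunbiased]
          simp
  rw [h1, h2]
  set s : ℝ := (inner ℝ (x - w) v : ℝ) with hs
  set N : ℝ := ‖x - w‖ ^ 2
  set V : ℝ := ‖v‖ ^ 2
  set I : ℝ := ∫ ω, ‖g ω‖ ^ 2 ∂μ
  have hyoung : -(2 * η * s) ≤ γ * N + η ^ 2 / γ * V := by
    have habs : |s| ≤ ‖x - w‖ * ‖v‖ := abs_real_inner_le_norm _ _
    have hneg : -(‖x - w‖ * ‖v‖) ≤ s := neg_le_of_abs_le habs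
    have hkey : 2 * η * (‖x - w‖ * ‖v‖) ≤ γ * N + η ^ 2 / γ * V := by
      rw [← sub_nonneg]
      have heq : γ * N + η ^ 2 / γ * V - 2 * η * (‖x - w‖ * ‖v‖)
          = (γ * ‖x - w‖ - η * ‖v‖) ^ 2 / γ := by
        field_simp [N, V]; ring
      rw [heq]; positivity
    nlinarith
  have h1p : (0:ℝ) ≤ 1 - p := by linarith
  have e : p * (η ^ 2 * I) + (1 - p) * (N - 2 * η * s + η ^ 2 * I)
      = (1 - p) * (N + -(2 * η * s)) + η ^ 2 * I := by ring
  rw [e]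
  calc (1 - p) * (N + -(2 * η * s)) + η ^ 2 * I
      ≤ (1 - p) * (N + (γ * N + η ^ 2 / γ * V)) + η ^ 2 * I := by
        have := mul_le_mul_of_nonneg_left (add_le_add_left hyoung N) h1p
        linarith
    _ = (1 - p) * (1 + γ) * N + (1 - p) * η ^ 2 / γ * V + η ^ 2 * I := by ring
end

section
/- Suppose a random sequence $\{\sigma_k^2\}$ of nonnegative reals and nonnegative reals $F_k$ (with $F_k = f(x^k) - f^* \ge 0$) satisfy $\mathbb{E}_k[F_{k+1}] \le (1 + L\eta^2 A_1) F_k - (\eta - \tfrac{L\eta^2 B_1}{2})\|\nabla f(x^k)\|^2 + \tfrac{L\eta^2 D_1}{2}\sigma_k^2 + \tfrac{L\eta^2}{2}C_1$ and $\mathbb{E}_k[\sigma_{k+1}^2] \le (1-\rho)\sigma_k^2 + 2A_2 F_k + B_2 \|\nabla f(x^k)\|^2 + C_2$, with $\rho \in (0,1]$. Define $\alpha = \frac{L\eta^2 D_1}{2\rho}$ and the Lyapunov function $\Delta^k = F_k + \alpha \sigma_k^2$. Then $\mathbb{E}_k[\Delta^{k+1}] \le (1 + L\eta^2 A_1 +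 2\alpha A_2)\Delta^k - \left(\eta - \tfrac{L\eta^2 B_1}{2} - \alpha B_2\right)\|\nabla f(x^k)\|^2 + \tfrac{L\eta^2}{2}C_1 + \alpha C_2$. -/
/-- Lyapunov construction at the heart of the unified main theorem: one step of
the recursions combines, with α = Lη²D₁/(2ρ), into a recursion for
Δ = F + ασ². (Conditional expectations are represented by their values.) -/
theorem stmt_16 (L η ρ A₁ A₂ B₁ B₂ C₁ C₂ D₁ : ℝ)
    (hL : 0 < L) (hη : 0 < η) (hρ0 : 0 < ρ) (hρ1 : ρ ≤ 1)
    (hA₁ : 0 ≤ A₁) (hA₂ : 0 ≤ A₂) (hB₁ : 0 ≤ B₁) (hB₂ : 0 ≤ B₂)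
    (hC₁ : 0 ≤ C₁) (hC₂ : 0 ≤ C₂) (hD₁ : 0 ≤ D₁)
    (F₀ F₁ σ₀ σ₁ G : ℝ)
    (hF₀ : 0 ≤ F₀) (hσ₀ : 0 ≤ σ₀) (hG : 0 ≤ G)
    (hrecF : F₁ ≤ (1 + L * η ^ 2 * A₁) * F₀ - (η - L * η ^ 2 * B₁ / 2) * G +
      L * η ^ 2 * D₁ / 2 * σ₀ + L * η ^ 2 / 2 * C₁)
    (hrecσ : σ₁ ≤ (1 - ρ) * σ₀ + 2 * A₂ * F₀ + B₂ * G + C₂)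
    (α : ℝ) (hα : α = L * η ^ 2 * D₁ / (2 * ρ)) :
    F₁ + α * σ₁ ≤
      (1 + L * η ^ 2 * A₁ + 2 * α * A₂) * (F₀ + α * σ₀) -
        (η - L * η ^ 2 * B₁ / 2 - α * B₂) * G +
        L * η ^ 2 / 2 * C₁ + α * C₂ := by
  have hα0 : 0 ≤ α := by
    rw [hα]
    positivity
  have hαρ : α * ρ = L * η ^ 2 * D₁ / 2 := by
    rw [hα]
    field_simp
  have h1 : 0 ≤ L * η ^ 2 * A₁ * (α * σ₀) := by positivity
  have h2 : 0 ≤ 2 * α * A₂ * (α * σ₀) := by positivity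
  have h3 := mul_le_mul_of_nonneg_left hrecσ hα0
  nlinarith [h1, h2, h3, hαρ]
end
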